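/- Let A ∈ ℝ^{m×n}, M ∈ ℝ^{m×c}, N ∈ ℝ^{r×n}, with condensed SVDs M = U_M Σ_M V_Mᵀ and N = U_N Σ_N V_Nᵀ. Suppose S_M ∈ ℝ^{s_c×m} and S_N ∈ ℝ^{s_r×n} satisfy: (a) for all x, ‖S_M U_M x‖₂² ≥ (1/2)‖U_M x‖₂² and ‖S_N V_N x‖₂² ≥ (1/2)‖V_N x‖₂², with also ‖S_M U_M x‖₂² ≤ (3/2)‖U_M x‖₂²; (b) ‖U_MᵀS_MᵀS_M B − U_Mᵀ B‖_F ≤ √(ε/c)‖U_M‖_F‖B‖_F for all B ∈ ℝ^{m×k}, and ‖C S_NᵀS_N V_N − C V_N‖_F ≤ √(ε/r)‖C‖_F‖V_N‖_F for all C ∈ ℝ^{k×n} (for relevant k). Let X* = M†AN† and X̂ = (S_M M)†S_M A S_Nᵀ(N S_Nᵀ)†. Then ‖A − MX̂N‖_F² ≤ (1 + 256ε)‖A − MX*N‖_F². -/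

import Mathlib

open Matrix BigOperators

/-- The four Penrose conditions: `P` is the Moore–Penrose pseudoinverse of `M`. -/
def IsMoorePenrose {m n : ℕ} (M : Matrix (Fin m) (Fin n) ℝ)
    (P : Matrix (Fin n) (Fin m) ℝ) : Prop :=
  M * P * M = M ∧ P * M * P = P ∧ (M * P)ᵀ = M * P ∧ (P * M)ᵀ = P * M

/-- Frobenius norm of a real matrix. -/
noncomputable def frobNorm {m n : ℕ} (A : Matrix (Fin m) (Fin n) ℝ) : ℝ :=
  Real.sqrt (∑ i, ∑ j, (A i j) ^ 2)

/-- Spectral (operator ℓ₂→ℓ₂) norm of a real matrix. -/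
noncomputable def specNorm {m n : ℕ} (A : Matrix (Fin m) (Fin n) ℝ) : ℝ :=
  ‖LinearMap.toContinuousLinearMap (Matrix.toEuclideanLin A)‖

/-- Squared Euclidean norm of a vector. -/
def sqNorm {n : ℕ} (x : Fin n → ℝ) : ℝ := ∑ i, (x i) ^ 2

noncomputable def fsq {m n : ℕ} (A : Matrix (Fin m) (Fin n) ℝ) : ℝ :=
  ∑ i, ∑ j, (A i j) ^ 2

lemma fsq_nonneg {m n : ℕ} (A : Matrix (Fin m) (Fin n) ℝ) : 0 ≤ fsq A := by
  unfold fsq; positivity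

lemma frobNorm_eq {m n : ℕ} (A : Matrix (Fin m) (Fin n) ℝ) :
    frobNorm A = Real.sqrt (fsq A) := rfl

lemma frobNorm_nonneg {m n : ℕ} (A : Matrix (Fin m) (Fin n) ℝ) : 0 ≤ frobNorm A :=
  Real.sqrt_nonneg _

lemma frobNorm_sq {m n : ℕ} (A : Matrix (Fin m) (Fin n) ℝ) :
    frobNorm A ^ 2 = fsq A := Real.sq_sqrt (fsq_nonneg A)

lemma trace_transpose_mul {m n : ℕ} (A B : Matrix (Fin m) (Fin n) ℝ) :
    (Aᵀ * B).trace = ∑ i, ∑ j, A i j * B i j := by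
  simp only [Matrix.trace, Matrix.diag, Matrix.mul_apply, Matrix.transpose_apply]
  rw [Finset.sum_comm]

lemma fsq_eq_trace {m n : ℕ} (A : Matrix (Fin m) (Fin n) ℝ) :
    fsq A = (Aᵀ * A).trace := by
  rw [trace_transpose_mul]; unfold fsq
  refine Finset.sum_congr rfl fun i _ => Finset.sum_congr rfl fun j _ => ?_
  ring

lemma fsq_add {m n : ℕ} (A B : Matrix (Fin m) (Fin n) ℝ) :
    fsq (A + B) = fsq A + fsq B + 2 * (Aᵀ * B).trace := by
  rw [trace_transpose_mul]; unfold fsq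
  rw [Finset.mul_sum, ← Finset.sum_add_distrib, ← Finset.sum_add_distrib]
  refine Finset.sum_congr rfl fun i _ => ?_
  rw [Finset.mul_sum, ← Finset.sum_add_distrib, ← Finset.sum_add_distrib]
  refine Finset.sum_congr rfl fun j _ => ?_
  simp only [Matrix.add_apply]; ring

lemma fsq_sub {m n : ℕ} (A B : Matrix (Fin m) (Fin n) ℝ) :
    fsq (A - B) = fsq A + fsq B - 2 * (Aᵀ * B).trace := by
  have h := fsq_add (A - B) B
  have h2 : (A - B)ᵀ * B = Aᵀ * B - Bᵀ * B := by
    rw [Matrix.transpose_sub, Matrix.sub_mul]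
  have h3 : fsq ((A - B) + B) = fsq A := by rw [sub_add_cancel]
  rw [h2, Matrix.trace_sub] at h
  rw [h3] at h
  have hb := fsq_eq_trace B
  linarith

lemma trace_cs {m n : ℕ} (A B : Matrix (Fin m) (Fin n) ℝ) :
    (Aᵀ * B).trace ≤ frobNorm A * frobNorm B := by
  have key : ((Aᵀ * B).trace) ^ 2 ≤ fsq A * fsq B := by
    rw [trace_transpose_mul]
    have := Finset.sum_mul_sq_le_sq_mul_sq (Finset.univ : Finset (Fin m × Fin n))
      (fun p => A p.1 p.2) (fun p => B p.1 p.2)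
    simpa [Fintype.sum_prod_type, fsq] using this
  have h1 : fsq A * fsq B = (frobNorm A * frobNorm B) ^ 2 := by
    rw [mul_pow, frobNorm_sq, frobNorm_sq]
  rw [h1] at key
  have h2 : 0 ≤ frobNorm A * frobNorm B :=
    mul_nonneg (frobNorm_nonneg A) (frobNorm_nonneg B)
  nlinarith [key, h2]

lemma frob_triangle {m n : ℕ} (A B : Matrix (Fin m) (Fin n) ℝ) :
    frobNorm (A + B) ≤ frobNorm A + frobNorm B := by
  have h1 : fsq (A + B) ≤ (frobNorm A + frobNorm B) ^ 2 := by
    rw [fsq_add]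
    have := trace_cs A B
    have ha := frobNorm_sq A; have hb := frobNorm_sq B
    nlinarith
  have h2 : 0 ≤ frobNorm A + frobNorm B :=
    add_nonneg (frobNorm_nonneg A) (frobNorm_nonneg B)
  calc frobNorm (A + B) = Real.sqrt (fsq (A + B)) := rfl
    _ ≤ Real.sqrt ((frobNorm A + frobNorm B) ^ 2) := Real.sqrt_le_sqrt h1
    _ = frobNorm A + frobNorm B := Real.sqrt_sq h2

lemma fsq_pyth {m n : ℕ} (A B : Matrix (Fin m) (Fin n) ℝ)
    (h : (Aᵀ * B).trace = 0) : fsq (A - B) = fsq A + fsq B := by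
  rw [fsq_sub, h]; ring

lemma sqNorm_nonneg {n : ℕ} (x : Fin n → ℝ) : 0 ≤ sqNorm x := by
  unfold sqNorm; positivity

lemma dot_self_eq_sqNorm {n : ℕ} (x : Fin n → ℝ) : x ⬝ᵥ x = sqNorm x := by
  unfold sqNorm dotProduct
  exact Finset.sum_congr rfl fun i _ => (sq (x i)).symm ▸ (pow_two (x i)).symm

lemma dot_cs {n : ℕ} (x y : Fin n → ℝ) : (x ⬝ᵥ y) ^ 2 ≤ sqNorm x * sqNorm y := by
  unfold sqNorm dotProduct
  exact Finset.sum_mul_sq_le_sq_mul_sq Finset.univ x y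

lemma quad_form {a b : ℕ} (B : Matrix (Fin a) (Fin b) ℝ) (x : Fin b → ℝ) :
    x ⬝ᵥ (Bᵀ * B).mulVec x = sqNorm (B.mulVec x) := by
  rw [← Matrix.mulVec_mulVec, Matrix.dotProduct_mulVec, Matrix.vecMul_transpose,
    dot_self_eq_sqNorm]

lemma sqNorm_mulVec_isometry {a b : ℕ} (U : Matrix (Fin a) (Fin b) ℝ)
    (hU : Uᵀ * U = 1) (x : Fin b → ℝ) : sqNorm (U.mulVec x) = sqNorm x := by
  rw [← quad_form, hU, Matrix.one_mulVec, dot_self_eq_sqNorm]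

/-- If `½‖x‖² ≤ ⟨x, Tx⟩` for all x then `¼‖x‖² ≤ ‖Tx‖²`. -/
lemma vec_lower {k : ℕ} (T : Matrix (Fin k) (Fin k) ℝ)
    (h : ∀ x, (1 / 2) * sqNorm x ≤ x ⬝ᵥ T.mulVec x) (x : Fin k → ℝ) :
    (1 / 4) * sqNorm x ≤ sqNorm (T.mulVec x) := by
  have h1 := h x
  have h2 := dot_cs x (T.mulVec x)
  have h3 := sqNorm_nonneg x
  have h4 := sqNorm_nonneg (T.mulVec x)
  rcases eq_or_lt_of_le h3 with h5 | h5
  · rw [← h5]; linarith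
  · nlinarith

lemma fsq_eq_sum_cols {a b : ℕ} (A : Matrix (Fin a) (Fin b) ℝ) :
    fsq A = ∑ j, sqNorm (fun i => A i j) := by
  unfold fsq sqNorm; rw [Finset.sum_comm]

lemma fsq_eq_sum_rows {a b : ℕ} (A : Matrix (Fin a) (Fin b) ℝ) :
    fsq A = ∑ i, sqNorm (A i) := rfl

lemma col_mul {a b d : ℕ} (T : Matrix (Fin a) (Fin b) ℝ)
    (Z : Matrix (Fin b) (Fin d) ℝ) (j : Fin d) :
    (fun i => (T * Z) i j) = T.mulVec (fun k => Z k j) := by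
  funext i; simp [Matrix.mul_apply, Matrix.mulVec, dotProduct]

lemma row_mul_symm {a b : ℕ} (Z : Matrix (Fin a) (Fin b) ℝ)
    (T : Matrix (Fin b) (Fin b) ℝ) (hT : Tᵀ = T) (i : Fin a) :
    (Z * T) i = T.mulVec (Z i) := by
  funext j
  simp only [Matrix.mul_apply, Matrix.mulVec, dotProduct]
  refine Finset.sum_congr rfl fun k _ => ?_
  have h2 : T k j = T j k := congrFun (congrFun hT j) k
  rw [h2]; ring

lemma mat_lower_left {b d : ℕ} (T : Matrix (Fin b) (Fin b) ℝ)
    (h : ∀ x, (1 / 4) * sqNorm x ≤ sqNorm (T.mulVec x))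
    (Z : Matrix (Fin b) (Fin d) ℝ) :
    (1 / 4) * fsq Z ≤ fsq (T * Z) := by
  rw [fsq_eq_sum_cols, fsq_eq_sum_cols, Finset.mul_sum]
  refine Finset.sum_le_sum fun j _ => ?_
  rw [col_mul]; exact h _

lemma mat_lower_right {a b : ℕ} (T : Matrix (Fin b) (Fin b) ℝ) (hT : Tᵀ = T)
    (h : ∀ x, (1 / 4) * sqNorm x ≤ sqNorm (T.mulVec x))
    (Z : Matrix (Fin a) (Fin b) ℝ) :
    (1 / 4) * fsq Z ≤ fsq (Z * T) := by
  rw [fsq_eq_sum_rows, fsq_eq_sum_rows, Finset.mul_sum]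
  refine Finset.sum_le_sum fun i _ => ?_
  rw [row_mul_symm _ _ hT]; exact h _

/-- ‖Vᵀ b‖² ≤ ‖b‖² when V has orthonormal columns. -/
lemma sqNorm_transpose_mulVec_le {a b : ℕ} (V : Matrix (Fin a) (Fin b) ℝ)
    (hV : Vᵀ * V = 1) (x : Fin a → ℝ) :
    sqNorm (Vᵀ.mulVec x) ≤ sqNorm x := by
  set w := V.mulVec (Vᵀ.mulVec x) with hw
  have h1 : sqNorm w = sqNorm (Vᵀ.mulVec x) := sqNorm_mulVec_isometry V hV _
  have h2 : x ⬝ᵥ w = sqNorm (Vᵀ.mulVec x) := by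
    rw [hw, Matrix.dotProduct_mulVec, ← Matrix.mulVec_transpose, dot_self_eq_sqNorm]
  have h3 := dot_cs x w
  rw [h2, h1] at h3
  have h4 := sqNorm_nonneg (Vᵀ.mulVec x)
  have h5 := sqNorm_nonneg x
  nlinarith

lemma fsq_transpose {a b : ℕ} (A : Matrix (Fin a) (Fin b) ℝ) : fsq Aᵀ = fsq A := by
  unfold fsq; rw [Finset.sum_comm]; rfl

lemma fsq_mul_orth_right {a b d : ℕ} (B : Matrix (Fin a) (Fin b) ℝ)
    (V : Matrix (Fin b) (Fin d) ℝ) (hV : Vᵀ * V = 1) :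
    fsq (B * V) ≤ fsq B := by
  rw [fsq_eq_sum_rows, fsq_eq_sum_rows]
  refine Finset.sum_le_sum fun i _ => ?_
  have : (B * V) i = Vᵀ.mulVec (B i) := by
    funext j; simp [Matrix.mul_apply, Matrix.mulVec, dotProduct, mul_comm]
  rw [this]; exact sqNorm_transpose_mulVec_le V hV _

lemma frob_mul_orth_right {a b d : ℕ} (B : Matrix (Fin a) (Fin b) ℝ)
    (V : Matrix (Fin b) (Fin d) ℝ) (hV : Vᵀ * V = 1) :
    frobNorm (B * V) ≤ frobNorm B :=
  Real.sqrt_le_sqrt (fsq_mul_orth_right B V hV)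

lemma frob_orth_mul_left {a b d : ℕ} (U : Matrix (Fin a) (Fin b) ℝ)
    (hU : Uᵀ * U = 1) (C : Matrix (Fin a) (Fin d) ℝ) :
    frobNorm (Uᵀ * C) ≤ frobNorm C := by
  rw [frobNorm_eq, frobNorm_eq, ← fsq_transpose (Uᵀ * C), ← fsq_transpose C]
  refine Real.sqrt_le_sqrt ?_
  rw [Matrix.transpose_mul, Matrix.transpose_transpose]
  exact fsq_mul_orth_right Cᵀ U hU

/-- ‖U Y Vᵀ‖_F = ‖Y‖_F for orthonormal-column U, V. -/
lemma fsq_conj {a b p q : ℕ} (U : Matrix (Fin a) (Fin p) ℝ)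
    (V : Matrix (Fin b) (Fin q) ℝ) (Y : Matrix (Fin p) (Fin q) ℝ)
    (hU : Uᵀ * U = 1) (hV : Vᵀ * V = 1) :
    fsq (U * Y * Vᵀ) = fsq Y := by
  rw [fsq_eq_trace, fsq_eq_trace]
  have h1 : (U * Y * Vᵀ)ᵀ * (U * Y * Vᵀ) = V * (Yᵀ * Y * Vᵀ) := by
    calc (U * Y * Vᵀ)ᵀ * (U * Y * Vᵀ)
        = V * Yᵀ * (Uᵀ * U) * Y * Vᵀ := by
          simp only [Matrix.transpose_mul, Matrix.transpose_transpose,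
            Matrix.mul_assoc]
      _ = V * (Yᵀ * Y * Vᵀ) := by rw [hU]; simp only [Matrix.mul_one,
            Matrix.mul_assoc]
  rw [h1, Matrix.trace_mul_comm]
  have h2 : Yᵀ * Y * Vᵀ * V = Yᵀ * Y := by
    rw [Matrix.mul_assoc, hV, Matrix.mul_one]
  rw [h2]

lemma fsq_orthonormal {a p : ℕ} (U : Matrix (Fin a) (Fin p) ℝ)
    (hU : Uᵀ * U = 1) : fsq U = p := by
  rw [fsq_eq_trace, hU, Matrix.trace_one]
  simp

lemma dim_le_of_orth {a p : ℕ} (V : Matrix (Fin a) (Fin p) ℝ)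
    (hV : Vᵀ * V = 1) : p ≤ a := by
  have h1 : (Vᵀ * V).rank = p := by rw [hV, Matrix.rank_one, Fintype.card_fin]
  have h2 : (Vᵀ * V).rank ≤ a := by
    simpa using le_trans (Matrix.rank_mul_le_right Vᵀ V) (Matrix.rank_le_card_height V)
  omega

/-- √(ε/c) · ‖U‖_F ≤ √ε when U has ρ ≤ c orthonormal columns. -/
lemma sqrt_eps_bound {a p : ℕ} (c : ℕ) (ε : ℝ) (hε : 0 ≤ ε)
    (U : Matrix (Fin a) (Fin p) ℝ) (hU : Uᵀ * U = 1) (hpc : p ≤ c) :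
    Real.sqrt (ε / c) * frobNorm U ≤ Real.sqrt ε := by
  have hfU : frobNorm U = Real.sqrt p := by
    rw [frobNorm_eq, fsq_orthonormal U hU]
  rw [hfU, ← Real.sqrt_mul (by positivity) (p : ℝ)]
  refine Real.sqrt_le_sqrt ?_
  rcases Nat.eq_zero_or_pos c with hc | hc
  · subst hc
    have : p = 0 := Nat.le_zero.mp hpc
    simp [this, hε]
  · have hc' : (0:ℝ) < c := by exact_mod_cast hc
    rw [div_mul_eq_mul_div, div_le_iff₀ hc']
    have : (p:ℝ) ≤ c := by exact_mod_cast hpc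
    nlinarith

/-- Uniqueness of the Moore–Penrose pseudoinverse. -/
lemma mp_unique {a b : ℕ} (M : Matrix (Fin a) (Fin b) ℝ)
    (P Q : Matrix (Fin b) (Fin a) ℝ)
    (hP : IsMoorePenrose M P) (hQ : IsMoorePenrose M Q) : P = Q := by
  obtain ⟨hP1, hP2, hP3, hP4⟩ := hP
  obtain ⟨hQ1, hQ2, hQ3, hQ4⟩ := hQ
  have hMP : M * P = M * Q := by
    calc M * P = (M * P)ᵀ := hP3.symm
      _ = (M * Q * (M * P))ᵀ := by rw [← Matrix.mul_assoc (M*Q) M P, hQ1]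
      _ = (M * P)ᵀ * (M * Q)ᵀ := by rw [Matrix.transpose_mul]
      _ = M * P * (M * Q) := by rw [hP3, hQ3]
      _ = M * P * M * Q := by rw [Matrix.mul_assoc (M*P) M Q]
      _ = M * Q := by rw [hP1]
  have hPM : P * M = Q * M := by
    calc P * M = (P * M)ᵀ := hP4.symm
      _ = ((P * M) * (Q * M))ᵀ := by
          rw [Matrix.mul_assoc P M (Q*M), ← Matrix.mul_assoc M Q M, hQ1]
      _ = (Q * M)ᵀ * (P * M)ᵀ := by rw [Matrix.transpose_mul]
      _ = Q * M * (P * M) := by rw [hP4, hQ4]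
      _ = Q * (M * P * M) := by simp only [Matrix.mul_assoc]
      _ = Q * M := by rw [hP1]
  calc P = P * M * P := hP2.symm
    _ = P * (M * Q) := by rw [Matrix.mul_assoc, hMP]
    _ = (Q * M) * Q := by rw [← Matrix.mul_assoc, hPM]
    _ = Q := hQ2

/-- The SVD formula for the pseudoinverse. -/
lemma svd_pinv {a b ρ : ℕ} (M : Matrix (Fin a) (Fin b) ℝ)
    (U : Matrix (Fin a) (Fin ρ) ℝ) (Sig : Matrix (Fin ρ) (Fin ρ) ℝ)
    (V : Matrix (Fin b) (Fin ρ) ℝ)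
    (hM : M = U * Sig * Vᵀ) (hU : Uᵀ * U = 1) (hV : Vᵀ * V = 1)
    (hS : IsUnit Sig.det) :
    IsMoorePenrose M (V * Sig⁻¹ * Uᵀ) ∧
      M * (V * Sig⁻¹ * Uᵀ) = U * Uᵀ ∧ (V * Sig⁻¹ * Uᵀ) * M = V * Vᵀ := by
  have hVc : ∀ {d : ℕ} (X : Matrix (Fin ρ) (Fin d) ℝ), Vᵀ * (V * X) = X := by
    intro d X; rw [← Matrix.mul_assoc, hV, Matrix.one_mul]
  have hUc : ∀ {d : ℕ} (X : Matrix (Fin ρ) (Fin d) ℝ), Uᵀ * (U * X) = X := by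
    intro d X; rw [← Matrix.mul_assoc, hU, Matrix.one_mul]
  have hS1 : Sig * Sig⁻¹ = 1 := Matrix.mul_nonsing_inv Sig hS
  have hS2 : Sig⁻¹ * Sig = 1 := Matrix.nonsing_inv_mul Sig hS
  have key1 : M * (V * Sig⁻¹ * Uᵀ) = U * Uᵀ := by
    rw [hM]
    calc U * Sig * Vᵀ * (V * Sig⁻¹ * Uᵀ)
        = U * (Sig * (Vᵀ * (V * (Sig⁻¹ * Uᵀ)))) := by
          simp only [Matrix.mul_assoc]
      _ = U * (Sig * (Sig⁻¹ * Uᵀ)) := by rw [hVc]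
      _ = U * ((Sig * Sig⁻¹) * Uᵀ) := by rw [Matrix.mul_assoc]
      _ = U * Uᵀ := by rw [hS1, Matrix.one_mul]
  have key2 : (V * Sig⁻¹ * Uᵀ) * M = V * Vᵀ := by
    rw [hM]
    calc V * Sig⁻¹ * Uᵀ * (U * Sig * Vᵀ)
        = V * (Sig⁻¹ * (Uᵀ * (U * (Sig * Vᵀ)))) := by
          simp only [Matrix.mul_assoc]
      _ = V * (Sig⁻¹ * (Sig * Vᵀ)) := by rw [hUc]
      _ = V * ((Sig⁻¹ * Sig) * Vᵀ) := by rw [Matrix.mul_assoc]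
      _ = V * Vᵀ := by rw [hS2, Matrix.one_mul]
  refine ⟨⟨?_, ?_, ?_, ?_⟩, key1, key2⟩
  · rw [key1, hM]
    calc U * Uᵀ * (U * Sig * Vᵀ) = U * (Uᵀ * (U * (Sig * Vᵀ))) := by
          simp only [Matrix.mul_assoc]
      _ = U * (Sig * Vᵀ) := by rw [hUc]
      _ = U * Sig * Vᵀ := by rw [Matrix.mul_assoc]
  · rw [Matrix.mul_assoc, key1]
    calc V * Sig⁻¹ * Uᵀ * (U * Uᵀ)
        = V * (Sig⁻¹ * (Uᵀ * (U * Uᵀ))) := by simp only [Matrix.mul_assoc]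
      _ = V * (Sig⁻¹ * Uᵀ) := by rw [hUc]
      _ = V * Sig⁻¹ * Uᵀ := by rw [Matrix.mul_assoc]
  · rw [key1, Matrix.transpose_mul, Matrix.transpose_transpose]
  · rw [key2, Matrix.transpose_mul, Matrix.transpose_transpose]

/-- The sketched solution satisfies the normal equations exactly. -/
lemma normal_eq {p q s t : ℕ} (B : Matrix (Fin p) (Fin q) ℝ)
    (C : Matrix (Fin s) (Fin t) ℝ) (S : Matrix (Fin p) (Fin t) ℝ)
    (P1 : Matrix (Fin q) (Fin p) ℝ) (P2 : Matrix (Fin t) (Fin s) ℝ)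
    (hP1 : IsMoorePenrose B P1) (hP2 : IsMoorePenrose C P2) :
    Bᵀ * (B * (P1 * S * P2) * C) * Cᵀ = Bᵀ * S * Cᵀ := by
  obtain ⟨h1, _, h3, _⟩ := hP1
  obtain ⟨g1, _, _, g4⟩ := hP2
  have hBB : Bᵀ * (B * P1) = Bᵀ := by
    rw [← h3, ← Matrix.transpose_mul, h1]
  have hCC : P2 * C * Cᵀ = Cᵀ := by
    rw [← g4, ← Matrix.transpose_mul, ← Matrix.mul_assoc, g1]
  calc Bᵀ * (B * (P1 * S * P2) * C) * Cᵀ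
      = (Bᵀ * (B * P1)) * S * (P2 * C * Cᵀ) := by
        simp only [Matrix.mul_assoc]
    _ = Bᵀ * S * Cᵀ := by rw [hBB, hCC, Matrix.mul_assoc]
lemma arith_final (ε e a1 a2 rr ys : ℝ) (hε : 0 < ε) (he0 : 0 ≤ e) (he1 : e ≤ 1)
    (he2 : e ^ 2 = ε) (ha1 : 0 ≤ a1) (ha2 : 0 ≤ a2) (hrr : 0 ≤ rr)
    (hy : ys ≤ 16 * rr ^ 2)
    (hr : rr ≤ e * (a1 + e * a1) + e * (a2 + e * a2)) :
    ys ≤ 256 * ε * (a1 ^ 2 + a2 ^ 2) := by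
  have hx : rr ≤ e * (1 + e) * (a1 + a2) := by nlinarith
  have hx2 : rr ^ 2 ≤ (e * (1 + e) * (a1 + a2)) ^ 2 := by nlinarith
  have e3 : (1 + e) ^ 2 ≤ 4 := by nlinarith
  have e4 : (a1 + a2) ^ 2 ≤ 2 * (a1 ^ 2 + a2 ^ 2) := by nlinarith [sq_nonneg (a1 - a2)]
  have e5 : (e * (1 + e) * (a1 + a2)) ^ 2 = ε * ((1 + e) ^ 2 * (a1 + a2) ^ 2) := by
    rw [← he2]; ring
  have e6 : (1 + e) ^ 2 * (a1 + a2) ^ 2 ≤ 4 * (2 * (a1 ^ 2 + a2 ^ 2)) :=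
    mul_le_mul e3 e4 (sq_nonneg _) (by norm_num)
  have e7 : ε * ((1 + e) ^ 2 * (a1 + a2) ^ 2) ≤ ε * (4 * (2 * (a1 ^ 2 + a2 ^ 2))) :=
    mul_le_mul_of_nonneg_left e6 hε.le
  have hnn : 0 ≤ ε * (a1 ^ 2 + a2 ^ 2) :=
    mul_nonneg hε.le (add_nonneg (sq_nonneg _) (sq_nonneg _))
  nlinarith [hx2, e5, e7]


set_option maxHeartbeats 1600000 in
theorem stmt17 (m n c r sc sr ρM ρN : ℕ) (ε : ℝ) (hε : 0 < ε) (hε1 : ε < 1)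
    (A : Matrix (Fin m) (Fin n) ℝ) (M : Matrix (Fin m) (Fin c) ℝ)
    (N : Matrix (Fin r) (Fin n) ℝ)
    (UM : Matrix (Fin m) (Fin ρM) ℝ) (SigM : Matrix (Fin ρM) (Fin ρM) ℝ)
    (VM : Matrix (Fin c) (Fin ρM) ℝ)
    (UN : Matrix (Fin r) (Fin ρN) ℝ) (SigN : Matrix (Fin ρN) (Fin ρN) ℝ)
    (VN : Matrix (Fin n) (Fin ρN) ℝ)
    (hMsvd : M = UM * SigM * VMᵀ) (hNsvd : N = UN * SigN * VNᵀ)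
    (hUM : UMᵀ * UM = 1) (hVM : VMᵀ * VM = 1)
    (hUN : UNᵀ * UN = 1) (hVN : VNᵀ * VN = 1)
    (hSigM : IsUnit SigM.det) (hSigMdiag : ∀ i j, i ≠ j → SigM i j = 0)
    (hSigN : IsUnit SigN.det) (hSigNdiag : ∀ i j, i ≠ j → SigN i j = 0)
    (SM : Matrix (Fin sc) (Fin m) ℝ) (SN : Matrix (Fin sr) (Fin n) ℝ)
    -- (a) subspace-embedding properties
    (ha1 : ∀ x : Fin ρM → ℝ,
      (1 / 2) * sqNorm (UM.mulVec x) ≤ sqNorm ((SM * UM).mulVec x))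
    (ha2 : ∀ x : Fin ρN → ℝ,
      (1 / 2) * sqNorm (VN.mulVec x) ≤ sqNorm ((SN * VN).mulVec x))
    (ha3 : ∀ x : Fin ρM → ℝ,
      sqNorm ((SM * UM).mulVec x) ≤ (3 / 2) * sqNorm (UM.mulVec x))
    -- (b) approximate-matrix-product properties
    (hb1 : ∀ (k : ℕ) (B : Matrix (Fin m) (Fin k) ℝ),
      frobNorm (UMᵀ * SMᵀ * SM * B - UMᵀ * B) ≤
        Real.sqrt (ε / c) * frobNorm UM * frobNorm B)
    (hb2 : ∀ (k : ℕ) (C : Matrix (Fin k) (Fin n) ℝ),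
      frobNorm (C * SNᵀ * SN * VN - C * VN) ≤
        Real.sqrt (ε / r) * frobNorm C * frobNorm VN)
    (Mdag : Matrix (Fin c) (Fin m) ℝ) (Ndag : Matrix (Fin n) (Fin r) ℝ)
    (hMdag : IsMoorePenrose M Mdag) (hNdag : IsMoorePenrose N Ndag)
    (P1 : Matrix (Fin c) (Fin sc) ℝ) (P2 : Matrix (Fin sr) (Fin r) ℝ)
    (hP1 : IsMoorePenrose (SM * M) P1)
    (hP2 : IsMoorePenrose (N * SNᵀ) P2) :
    frobNorm (A - M * (P1 * SM * A * SNᵀ * P2) * N) ^ 2 ≤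
      (1 + 256 * ε) * frobNorm (A - M * (Mdag * A * Ndag) * N) ^ 2 := by
  clear ha3 hSigMdiag hSigNdiag
  -- pseudoinverse formulas
  obtain ⟨hMp, hMMdag0, -⟩ := svd_pinv M UM SigM VM hMsvd hUM hVM hSigM
  obtain ⟨hNp, -, hNdagN0⟩ := svd_pinv N UN SigN VN hNsvd hUN hVN hSigN
  have hMdeq : Mdag = VM * SigM⁻¹ * UMᵀ := mp_unique M Mdag _ hMdag hMp
  have hNdeq : Ndag = VN * SigN⁻¹ * UNᵀ := mp_unique N Ndag _ hNdag hNp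
  have hMMdag : M * Mdag = UM * UMᵀ := by rw [hMdeq]; exact hMMdag0
  have hNdagN : Ndag * N = VN * VNᵀ := by rw [hNdeq]; exact hNdagN0
  -- dimensions
  have hρc : ρM ≤ c := dim_le_of_orth VM hVM
  have hρr : ρN ≤ r := dim_le_of_orth UN hUN
  -- sqrt epsilon abbreviation
  have he0 : (0:ℝ) ≤ Real.sqrt ε := Real.sqrt_nonneg ε
  have he1 : Real.sqrt ε ≤ 1 := by
    rw [show (1:ℝ) = Real.sqrt 1 from (Real.sqrt_one).symm]
    exact Real.sqrt_le_sqrt hε1.le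
  have he2 : Real.sqrt ε ^ 2 = ε := Real.sq_sqrt hε.le
  -- approximate matrix product with clean constants
  have hbM : ∀ (k : ℕ) (B : Matrix (Fin m) (Fin k) ℝ),
      frobNorm (UMᵀ * SMᵀ * SM * B - UMᵀ * B) ≤ Real.sqrt ε * frobNorm B := by
    intro k B
    refine le_trans (hb1 k B) ?_
    exact mul_le_mul_of_nonneg_right (sqrt_eps_bound c ε hε.le UM hUM hρc)
      (frobNorm_nonneg B)
  have hbN : ∀ (k : ℕ) (C : Matrix (Fin k) (Fin n) ℝ),
      frobNorm (C * SNᵀ * SN * VN - C * VN) ≤ Real.sqrt ε * frobNorm C := by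
    intro k C
    refine le_trans (hb2 k C) ?_
    calc Real.sqrt (ε / r) * frobNorm C * frobNorm VN
        = (Real.sqrt (ε / r) * frobNorm VN) * frobNorm C := by ring
      _ ≤ Real.sqrt ε * frobNorm C :=
          mul_le_mul_of_nonneg_right (sqrt_eps_bound r ε hε.le VN hVN hρr)
            (frobNorm_nonneg C)
  -- the optimum
  have step1 : M * (Mdag * A * Ndag) * N = UM * (UMᵀ * (A * VN)) * VNᵀ := by
    have e1 : M * (Mdag * A * Ndag) * N = M * Mdag * (A * (Ndag * N)) := by
      simp only [Matrix.mul_assoc]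
    rw [e1, hMMdag, hNdagN]
    simp only [Matrix.mul_assoc]
  have orth : UMᵀ * (A - UM * (UMᵀ * (A * VN)) * VNᵀ) * VN = 0 := by
    rw [Matrix.mul_sub UMᵀ A (UM * (UMᵀ * (A * VN)) * VNᵀ), Matrix.sub_mul (UMᵀ * A) _ VN]
    have e1 : UMᵀ * (UM * (UMᵀ * (A * VN)) * VNᵀ) * VN = (UMᵀ * (A * VN)) := by
      calc UMᵀ * (UM * (UMᵀ * (A * VN)) * VNᵀ) * VN
          = (UMᵀ * UM) * ((UMᵀ * (A * VN)) * (VNᵀ * VN)) := by simp only [Matrix.mul_assoc]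
        _ = (UMᵀ * (A * VN)) := by rw [hUM, hVN, Matrix.one_mul, Matrix.mul_one]
    have e2 : UMᵀ * A * VN = (UMᵀ * (A * VN)) := by rw [Matrix.mul_assoc]
    rw [e1, e2, sub_self]
  have step2 : M * (P1 * SM * A * SNᵀ * P2) * N = UM * (SigM * (VMᵀ * ((P1 * SM * A * SNᵀ * P2) * UN)) * SigN) * VNᵀ := by
    rw [hMsvd, hNsvd]; simp only [Matrix.mul_assoc]
  have step3 : A - M * (P1 * SM * A * SNᵀ * P2) * N = (A - UM * (UMᵀ * (A * VN)) * VNᵀ) - UM * ((SigM * (VMᵀ * ((P1 * SM * A * SNᵀ * P2) * UN)) * SigN) - (UMᵀ * (A * VN))) * VNᵀ := by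
    rw [step2, Matrix.mul_sub UM (SigM * (VMᵀ * ((P1 * SM * A * SNᵀ * P2) * UN)) * SigN) (UMᵀ * (A * VN)),
      Matrix.sub_mul (UM * (SigM * (VMᵀ * ((P1 * SM * A * SNᵀ * P2) * UN)) * SigN)) (UM * (UMᵀ * (A * VN))) VNᵀ]
    abel
  -- Pythagoras
  have horthtr : ((A - UM * (UMᵀ * (A * VN)) * VNᵀ)ᵀ * (UM * ((SigM * (VMᵀ * ((P1 * SM * A * SNᵀ * P2) * UN)) * SigN) - (UMᵀ * (A * VN))) * VNᵀ)).trace = 0 := by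
    have e1 : (A - UM * (UMᵀ * (A * VN)) * VNᵀ)ᵀ * (UM * ((SigM * (VMᵀ * ((P1 * SM * A * SNᵀ * P2) * UN)) * SigN) - (UMᵀ * (A * VN))) * VNᵀ) = ((A - UM * (UMᵀ * (A * VN)) * VNᵀ)ᵀ * UM * ((SigM * (VMᵀ * ((P1 * SM * A * SNᵀ * P2) * UN)) * SigN) - (UMᵀ * (A * VN)))) * VNᵀ := by
      simp only [Matrix.mul_assoc]
    rw [e1, Matrix.trace_mul_comm]
    have e2 : VNᵀ * ((A - UM * (UMᵀ * (A * VN)) * VNᵀ)ᵀ * UM * ((SigM * (VMᵀ * ((P1 * SM * A * SNᵀ * P2) * UN)) * SigN) - (UMᵀ * (A * VN)))) = (VNᵀ * (A - UM * (UMᵀ * (A * VN)) * VNᵀ)ᵀ * UM) * ((SigM * (VMᵀ * ((P1 * SM * A * SNᵀ * P2) * UN)) * SigN) - (UMᵀ * (A * VN))) := by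
      simp only [Matrix.mul_assoc]
    have e3 : VNᵀ * (A - UM * (UMᵀ * (A * VN)) * VNᵀ)ᵀ * UM = (UMᵀ * (A - UM * (UMᵀ * (A * VN)) * VNᵀ) * VN)ᵀ := by
      simp only [Matrix.transpose_mul, Matrix.transpose_transpose,
        Matrix.mul_assoc]
    rw [e2, e3, orth]
    simp
  have split : fsq (A - M * (P1 * SM * A * SNᵀ * P2) * N) = fsq (A - UM * (UMᵀ * (A * VN)) * VNᵀ) + fsq ((SigM * (VMᵀ * ((P1 * SM * A * SNᵀ * P2) * UN)) * SigN) - (UMᵀ * (A * VN))) := by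
    rw [step3, fsq_pyth _ _ horthtr, fsq_conj UM VN ((SigM * (VMᵀ * ((P1 * SM * A * SNᵀ * P2) * UN)) * SigN) - (UMᵀ * (A * VN))) hUM hVN]
  -- normal equations
  set G := M * (P1 * SM * A * SNᵀ * P2) * N - A with hG
  have neq0 := normal_eq (SM * M) (N * SNᵀ) (SM * A * SNᵀ) P1 P2 hP1 hP2
  have eL : (SM * M)ᵀ * ((SM * M) * (P1 * (SM * A * SNᵀ) * P2) * (N * SNᵀ)) * (N * SNᵀ)ᵀ
      = Mᵀ * (SMᵀ * (SM * ((M * (P1 * SM * A * SNᵀ * P2) * N) * (SNᵀ * (SN * Nᵀ))))) := by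
    simp only [Matrix.transpose_mul, Matrix.transpose_transpose, Matrix.mul_assoc]
  have eR : (SM * M)ᵀ * (SM * A * SNᵀ) * (N * SNᵀ)ᵀ
      = Mᵀ * (SMᵀ * (SM * (A * (SNᵀ * (SN * Nᵀ))))) := by
    simp only [Matrix.transpose_mul, Matrix.transpose_transpose, Matrix.mul_assoc]
  have neq1 : Mᵀ * (SMᵀ * (SM * (G * (SNᵀ * (SN * Nᵀ))))) = 0 := by
    rw [hG]
    simp only [Matrix.sub_mul, Matrix.mul_sub]
    rw [← eL, ← eR, neq0, sub_self]
  have eStrip : Mᵀ * (SMᵀ * (SM * (G * (SNᵀ * (SN * Nᵀ)))))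
      = VM * (SigMᵀ * ((UMᵀ * (SMᵀ * (SM * (G * (SNᵀ * (SN * VN)))))) * (SigNᵀ * UNᵀ))) := by
    rw [hMsvd, hNsvd]
    simp only [Matrix.transpose_mul, Matrix.transpose_transpose, Matrix.mul_assoc]
  have h1 : VM * (SigMᵀ * ((UMᵀ * (SMᵀ * (SM * (G * (SNᵀ * (SN * VN)))))) * (SigNᵀ * UNᵀ))) = 0 := by
    rw [← eStrip]; exact neq1
  have hVMc : ∀ {d : ℕ} (X : Matrix (Fin ρM) (Fin d) ℝ), VMᵀ * (VM * X) = X := by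
    intro d X; rw [← Matrix.mul_assoc, hVM, Matrix.one_mul]
  have hdetM : IsUnit (SigMᵀ).det := by rwa [Matrix.det_transpose]
  have hdetN : IsUnit (SigNᵀ).det := by rwa [Matrix.det_transpose]
  have hSMc : ∀ {d : ℕ} (X : Matrix (Fin ρM) (Fin d) ℝ), (SigMᵀ)⁻¹ * (SigMᵀ * X) = X := by
    intro d X; rw [← Matrix.mul_assoc, Matrix.nonsing_inv_mul _ hdetM, Matrix.one_mul]
  have hUNc : ∀ {d : ℕ} (X : Matrix (Fin d) (Fin ρN) ℝ), X * (SigNᵀ * UNᵀ) * UN = X * SigNᵀ := by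
    intro d X; rw [Matrix.mul_assoc, Matrix.mul_assoc SigNᵀ UNᵀ UN, hUN, Matrix.mul_one]
  have hSNc : ∀ {d : ℕ} (X : Matrix (Fin d) (Fin ρN) ℝ), X * SigNᵀ * (SigNᵀ)⁻¹ = X := by
    intro d X; rw [Matrix.mul_assoc, Matrix.mul_nonsing_inv _ hdetN, Matrix.mul_one]
  have h2 : SigMᵀ * ((UMᵀ * (SMᵀ * (SM * (G * (SNᵀ * (SN * VN)))))) * (SigNᵀ * UNᵀ)) = 0 := by
    calc SigMᵀ * ((UMᵀ * (SMᵀ * (SM * (G * (SNᵀ * (SN * VN)))))) * (SigNᵀ * UNᵀ))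
        = VMᵀ * (VM * (SigMᵀ * ((UMᵀ * (SMᵀ * (SM * (G * (SNᵀ * (SN * VN)))))) * (SigNᵀ * UNᵀ)))) := (hVMc _).symm
      _ = VMᵀ * (0 : Matrix (Fin c) (Fin r) ℝ) := by rw [h1]
      _ = 0 := Matrix.mul_zero _
  have h3 : (UMᵀ * (SMᵀ * (SM * (G * (SNᵀ * (SN * VN)))))) * (SigNᵀ * UNᵀ) = 0 := by
    calc (UMᵀ * (SMᵀ * (SM * (G * (SNᵀ * (SN * VN)))))) * (SigNᵀ * UNᵀ)
        = (SigMᵀ)⁻¹ * (SigMᵀ * ((UMᵀ * (SMᵀ * (SM * (G * (SNᵀ * (SN * VN)))))) * (SigNᵀ * UNᵀ))) := (hSMc _).symm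
      _ = (SigMᵀ)⁻¹ * (0 : Matrix (Fin ρM) (Fin r) ℝ) := by rw [h2]
      _ = 0 := Matrix.mul_zero _
  have h4 : (UMᵀ * (SMᵀ * (SM * (G * (SNᵀ * (SN * VN)))))) * SigNᵀ = 0 := by
    calc (UMᵀ * (SMᵀ * (SM * (G * (SNᵀ * (SN * VN)))))) * SigNᵀ
        = (UMᵀ * (SMᵀ * (SM * (G * (SNᵀ * (SN * VN)))))) * (SigNᵀ * UNᵀ) * UN := (hUNc _).symm
      _ = (0 : Matrix (Fin ρM) (Fin r) ℝ) * UN := by rw [h3]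
      _ = 0 := Matrix.zero_mul _
  have h5 : (UMᵀ * (SMᵀ * (SM * (G * (SNᵀ * (SN * VN)))))) = 0 := by
    calc (UMᵀ * (SMᵀ * (SM * (G * (SNᵀ * (SN * VN))))))
        = (UMᵀ * (SMᵀ * (SM * (G * (SNᵀ * (SN * VN)))))) * SigNᵀ * (SigNᵀ)⁻¹ := (hSNc _).symm
      _ = (0 : Matrix (Fin ρM) (Fin ρN) ℝ) * (SigNᵀ)⁻¹ := by rw [h4]
      _ = 0 := Matrix.zero_mul _
  have hGeq : G = UM * ((SigM * (VMᵀ * ((P1 * SM * A * SNᵀ * P2) * UN)) * SigN) - (UMᵀ * (A * VN))) * VNᵀ - (A - UM * (UMᵀ * (A * VN)) * VNᵀ) := by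
    calc G = M * (P1 * SM * A * SNᵀ * P2) * N - A := hG
      _ = -(A - M * (P1 * SM * A * SNᵀ * P2) * N) := (neg_sub _ _).symm
      _ = -((A - UM * (UMᵀ * (A * VN)) * VNᵀ) - UM * ((SigM * (VMᵀ * ((P1 * SM * A * SNᵀ * P2) * UN)) * SigN) - (UMᵀ * (A * VN))) * VNᵀ) := by rw [step3]
      _ = UM * ((SigM * (VMᵀ * ((P1 * SM * A * SNᵀ * P2) * UN)) * SigN) - (UMᵀ * (A * VN))) * VNᵀ - (A - UM * (UMᵀ * (A * VN)) * VNᵀ) := neg_sub _ _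
  have key : ((SM * UM)ᵀ * (SM * UM)) * (((SigM * (VMᵀ * ((P1 * SM * A * SNᵀ * P2) * UN)) * SigN) - (UMᵀ * (A * VN))) * ((SN * VN)ᵀ * (SN * VN))) - (UMᵀ * (SMᵀ * (SM * ((A - UM * (UMᵀ * (A * VN)) * VNᵀ) * (SNᵀ * (SN * VN))))))
      = UMᵀ * (SMᵀ * (SM * (G * (SNᵀ * (SN * VN))))) := by
    rw [hGeq]
    simp only [Matrix.transpose_mul, Matrix.transpose_transpose, Matrix.mul_assoc,
      Matrix.sub_mul, Matrix.mul_sub]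
  have hTYT : ((SM * UM)ᵀ * (SM * UM)) * (((SigM * (VMᵀ * ((P1 * SM * A * SNᵀ * P2) * UN)) * SigN) - (UMᵀ * (A * VN))) * ((SN * VN)ᵀ * (SN * VN))) = (UMᵀ * (SMᵀ * (SM * ((A - UM * (UMᵀ * (A * VN)) * VNᵀ) * (SNᵀ * (SN * VN)))))) := by
    have : ((SM * UM)ᵀ * (SM * UM)) * (((SigM * (VMᵀ * ((P1 * SM * A * SNᵀ * P2) * UN)) * SigN) - (UMᵀ * (A * VN))) * ((SN * VN)ᵀ * (SN * VN))) - (UMᵀ * (SMᵀ * (SM * ((A - UM * (UMᵀ * (A * VN)) * VNᵀ) * (SNᵀ * (SN * VN)))))) = 0 := by rw [key]; exact h5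
    exact sub_eq_zero.mp this
  -- lower bounds from subspace embedding
  have hTm : ∀ x, (1 / 4) * sqNorm x ≤ sqNorm ((((SM * UM)ᵀ * (SM * UM))).mulVec x) := by
    apply vec_lower
    intro x
    rw [quad_form]
    have hx := ha1 x
    rwa [sqNorm_mulVec_isometry UM hUM] at hx
  have hTn : ∀ x, (1 / 4) * sqNorm x ≤ sqNorm ((((SN * VN)ᵀ * (SN * VN))).mulVec x) := by
    apply vec_lower
    intro x
    rw [quad_form]
    have hx := ha2 x
    rwa [sqNorm_mulVec_isometry VN hVN] at hx
  have hTnsym : (((SN * VN)ᵀ * (SN * VN)))ᵀ = ((SN * VN)ᵀ * (SN * VN)) := by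
    rw [Matrix.transpose_mul, Matrix.transpose_transpose]
  have hY16 : fsq ((SigM * (VMᵀ * ((P1 * SM * A * SNᵀ * P2) * UN)) * SigN) - (UMᵀ * (A * VN))) ≤ 16 * fsq (UMᵀ * (SMᵀ * (SM * ((A - UM * (UMᵀ * (A * VN)) * VNᵀ) * (SNᵀ * (SN * VN)))))) := by
    have l1 := mat_lower_left ((SM * UM)ᵀ * (SM * UM)) hTm (((SigM * (VMᵀ * ((P1 * SM * A * SNᵀ * P2) * UN)) * SigN) - (UMᵀ * (A * VN))) * ((SN * VN)ᵀ * (SN * VN)))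
    rw [hTYT] at l1
    have l2 := mat_lower_right ((SN * VN)ᵀ * (SN * VN)) hTnsym hTn ((SigM * (VMᵀ * ((P1 * SM * A * SNᵀ * P2) * UN)) * SigN) - (UMᵀ * (A * VN)))
    linarith
  -- decomposition of the residual
  have hA1 : UMᵀ * ((A - UM * (UMᵀ * (A * VN)) * VNᵀ) - (UM * (UMᵀ * (A - UM * (UMᵀ * (A * VN)) * VNᵀ)))) = 0 := by
    rw [Matrix.mul_sub UMᵀ (A - UM * (UMᵀ * (A * VN)) * VNᵀ) (UM * (UMᵀ * (A - UM * (UMᵀ * (A * VN)) * VNᵀ))), ← Matrix.mul_assoc UMᵀ UM (UMᵀ * (A - UM * (UMᵀ * (A * VN)) * VNᵀ)),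
      hUM, Matrix.one_mul, sub_self]
  have hA2VN : (UM * (UMᵀ * (A - UM * (UMᵀ * (A * VN)) * VNᵀ))) * VN = 0 := by
    calc (UM * (UMᵀ * (A - UM * (UMᵀ * (A * VN)) * VNᵀ))) * VN = UM * ((UMᵀ * (A - UM * (UMᵀ * (A * VN)) * VNᵀ)) * VN) := by simp only [Matrix.mul_assoc]
      _ = UM * (UMᵀ * (A - UM * (UMᵀ * (A * VN)) * VNᵀ) * VN) := by rw [Matrix.mul_assoc]
      _ = 0 := by rw [orth, Matrix.mul_zero]
  have hsum : ((A - UM * (UMᵀ * (A * VN)) * VNᵀ) - (UM * (UMᵀ * (A - UM * (UMᵀ * (A * VN)) * VNᵀ)))) + (UM * (UMᵀ * (A - UM * (UMᵀ * (A * VN)) * VNᵀ))) = (A - UM * (UMᵀ * (A * VN)) * VNᵀ) := by abel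
  have hpyth2 : fsq (A - UM * (UMᵀ * (A * VN)) * VNᵀ) = fsq ((A - UM * (UMᵀ * (A * VN)) * VNᵀ) - (UM * (UMᵀ * (A - UM * (UMᵀ * (A * VN)) * VNᵀ)))) + fsq (UM * (UMᵀ * (A - UM * (UMᵀ * (A * VN)) * VNᵀ))) := by
    have e : ((A - UM * (UMᵀ * (A * VN)) * VNᵀ) - (UM * (UMᵀ * (A - UM * (UMᵀ * (A * VN)) * VNᵀ))))ᵀ * UM = 0 := by
      have h := congrArg Matrix.transpose hA1
      rwa [Matrix.transpose_mul, Matrix.transpose_transpose, Matrix.transpose_zero] at h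
    have h0 : ((A - UM * (UMᵀ * (A * VN)) * VNᵀ) - (UM * (UMᵀ * (A - UM * (UMᵀ * (A * VN)) * VNᵀ))))ᵀ * (UM * (UMᵀ * (A - UM * (UMᵀ * (A * VN)) * VNᵀ))) = 0 := by
      calc ((A - UM * (UMᵀ * (A * VN)) * VNᵀ) - (UM * (UMᵀ * (A - UM * (UMᵀ * (A * VN)) * VNᵀ))))ᵀ * (UM * (UMᵀ * (A - UM * (UMᵀ * (A * VN)) * VNᵀ))) = (((A - UM * (UMᵀ * (A * VN)) * VNᵀ) - (UM * (UMᵀ * (A - UM * (UMᵀ * (A * VN)) * VNᵀ))))ᵀ * UM) * (UMᵀ * (A - UM * (UMᵀ * (A * VN)) * VNᵀ)) := by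
            simp only [Matrix.mul_assoc]
        _ = 0 := by rw [e, Matrix.zero_mul]
    have hadd := fsq_add ((A - UM * (UMᵀ * (A * VN)) * VNᵀ) - (UM * (UMᵀ * (A - UM * (UMᵀ * (A * VN)) * VNᵀ)))) (UM * (UMᵀ * (A - UM * (UMᵀ * (A * VN)) * VNᵀ)))
    rw [h0, Matrix.trace_zero, hsum] at hadd
    linarith
  have hRsplitEq : (UMᵀ * (SMᵀ * (SM * (((A - UM * (UMᵀ * (A * VN)) * VNᵀ) - (UM * (UMᵀ * (A - UM * (UMᵀ * (A * VN)) * VNᵀ)))) * (SNᵀ * (SN * VN)))))) + (UMᵀ * (SMᵀ * (SM * ((UM * (UMᵀ * (A - UM * (UMᵀ * (A * VN)) * VNᵀ))) * (SNᵀ * (SN * VN)))))) = (UMᵀ * (SMᵀ * (SM * ((A - UM * (UMᵀ * (A * VN)) * VNᵀ) * (SNᵀ * (SN * VN)))))) := by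
    rw [← Matrix.mul_add UMᵀ (SMᵀ * (SM * (((A - UM * (UMᵀ * (A * VN)) * VNᵀ) - (UM * (UMᵀ * (A - UM * (UMᵀ * (A * VN)) * VNᵀ)))) * (SNᵀ * (SN * VN))))) (SMᵀ * (SM * ((UM * (UMᵀ * (A - UM * (UMᵀ * (A * VN)) * VNᵀ))) * (SNᵀ * (SN * VN))))),
      ← Matrix.mul_add SMᵀ (SM * (((A - UM * (UMᵀ * (A * VN)) * VNᵀ) - (UM * (UMᵀ * (A - UM * (UMᵀ * (A * VN)) * VNᵀ)))) * (SNᵀ * (SN * VN)))) (SM * ((UM * (UMᵀ * (A - UM * (UMᵀ * (A * VN)) * VNᵀ))) * (SNᵀ * (SN * VN)))),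
      ← Matrix.mul_add SM (((A - UM * (UMᵀ * (A * VN)) * VNᵀ) - (UM * (UMᵀ * (A - UM * (UMᵀ * (A * VN)) * VNᵀ)))) * (SNᵀ * (SN * VN))) ((UM * (UMᵀ * (A - UM * (UMᵀ * (A * VN)) * VNᵀ))) * (SNᵀ * (SN * VN))),
      ← Matrix.add_mul ((A - UM * (UMᵀ * (A * VN)) * VNᵀ) - (UM * (UMᵀ * (A - UM * (UMᵀ * (A * VN)) * VNᵀ)))) (UM * (UMᵀ * (A - UM * (UMᵀ * (A * VN)) * VNᵀ))) (SNᵀ * (SN * VN)), hsum]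
  -- bound on R1
  have hUB1 : UMᵀ * (((A - UM * (UMᵀ * (A * VN)) * VNᵀ) - (UM * (UMᵀ * (A - UM * (UMᵀ * (A * VN)) * VNᵀ)))) * (SNᵀ * (SN * VN))) = 0 := by
    rw [← Matrix.mul_assoc UMᵀ ((A - UM * (UMᵀ * (A * VN)) * VNᵀ) - (UM * (UMᵀ * (A - UM * (UMᵀ * (A * VN)) * VNᵀ)))) (SNᵀ * (SN * VN)), hA1, Matrix.zero_mul]
  have eR1 : (UMᵀ * (SMᵀ * (SM * (((A - UM * (UMᵀ * (A * VN)) * VNᵀ) - (UM * (UMᵀ * (A - UM * (UMᵀ * (A * VN)) * VNᵀ)))) * (SNᵀ * (SN * VN)))))) = UMᵀ * SMᵀ * SM * (((A - UM * (UMᵀ * (A * VN)) * VNᵀ) - (UM * (UMᵀ * (A - UM * (UMᵀ * (A * VN)) * VNᵀ)))) * (SNᵀ * (SN * VN))) - UMᵀ * (((A - UM * (UMᵀ * (A * VN)) * VNᵀ) - (UM * (UMᵀ * (A - UM * (UMᵀ * (A * VN)) * VNᵀ)))) * (SNᵀ * (SN * VN))) := by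
    rw [hUB1, sub_zero]; simp only [Matrix.mul_assoc]
  have hB1b : frobNorm (((A - UM * (UMᵀ * (A * VN)) * VNᵀ) - (UM * (UMᵀ * (A - UM * (UMᵀ * (A * VN)) * VNᵀ)))) * (SNᵀ * (SN * VN))) ≤ frobNorm ((A - UM * (UMᵀ * (A * VN)) * VNᵀ) - (UM * (UMᵀ * (A - UM * (UMᵀ * (A * VN)) * VNᵀ)))) + Real.sqrt ε * frobNorm ((A - UM * (UMᵀ * (A * VN)) * VNᵀ) - (UM * (UMᵀ * (A - UM * (UMᵀ * (A * VN)) * VNᵀ)))) := by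
    have t1 : frobNorm ((((A - UM * (UMᵀ * (A * VN)) * VNᵀ) - (UM * (UMᵀ * (A - UM * (UMᵀ * (A * VN)) * VNᵀ)))) * (SNᵀ * (SN * VN))) - ((A - UM * (UMᵀ * (A * VN)) * VNᵀ) - (UM * (UMᵀ * (A - UM * (UMᵀ * (A * VN)) * VNᵀ)))) * VN) ≤ Real.sqrt ε * frobNorm ((A - UM * (UMᵀ * (A * VN)) * VNᵀ) - (UM * (UMᵀ * (A - UM * (UMᵀ * (A * VN)) * VNᵀ)))) := by
      have h := hbN m ((A - UM * (UMᵀ * (A * VN)) * VNᵀ) - (UM * (UMᵀ * (A - UM * (UMᵀ * (A * VN)) * VNᵀ))))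
      rwa [show ((A - UM * (UMᵀ * (A * VN)) * VNᵀ) - (UM * (UMᵀ * (A - UM * (UMᵀ * (A * VN)) * VNᵀ)))) * SNᵀ * SN * VN = (((A - UM * (UMᵀ * (A * VN)) * VNᵀ) - (UM * (UMᵀ * (A - UM * (UMᵀ * (A * VN)) * VNᵀ)))) * (SNᵀ * (SN * VN))) from by simp only [Matrix.mul_assoc]] at h
    have t2 : frobNorm (((A - UM * (UMᵀ * (A * VN)) * VNᵀ) - (UM * (UMᵀ * (A - UM * (UMᵀ * (A * VN)) * VNᵀ)))) * (SNᵀ * (SN * VN))) ≤ frobNorm (((A - UM * (UMᵀ * (A * VN)) * VNᵀ) - (UM * (UMᵀ * (A - UM * (UMᵀ * (A * VN)) * VNᵀ)))) * VN) + frobNorm ((((A - UM * (UMᵀ * (A * VN)) * VNᵀ) - (UM * (UMᵀ * (A - UM * (UMᵀ * (A * VN)) * VNᵀ)))) * (SNᵀ * (SN * VN))) - ((A - UM * (UMᵀ * (A * VN)) * VNᵀ) - (UM * (UMᵀ * (A - UM * (UMᵀ * (A * VN)) * VNᵀ)))) * VN) := by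
      have h := frob_triangle (((A - UM * (UMᵀ * (A * VN)) * VNᵀ) - (UM * (UMᵀ * (A - UM * (UMᵀ * (A * VN)) * VNᵀ)))) * VN) ((((A - UM * (UMᵀ * (A * VN)) * VNᵀ) - (UM * (UMᵀ * (A - UM * (UMᵀ * (A * VN)) * VNᵀ)))) * (SNᵀ * (SN * VN))) - ((A - UM * (UMᵀ * (A * VN)) * VNᵀ) - (UM * (UMᵀ * (A - UM * (UMᵀ * (A * VN)) * VNᵀ)))) * VN)
      have e : ((A - UM * (UMᵀ * (A * VN)) * VNᵀ) - (UM * (UMᵀ * (A - UM * (UMᵀ * (A * VN)) * VNᵀ)))) * VN + ((((A - UM * (UMᵀ * (A * VN)) * VNᵀ) - (UM * (UMᵀ * (A - UM * (UMᵀ * (A * VN)) * VNᵀ)))) * (SNᵀ * (SN * VN))) - ((A - UM * (UMᵀ * (A * VN)) * VNᵀ) - (UM * (UMᵀ * (A - UM * (UMᵀ * (A * VN)) * VNᵀ)))) * VN) = (((A - UM * (UMᵀ * (A * VN)) * VNᵀ) - (UM * (UMᵀ * (A - UM * (UMᵀ * (A * VN)) * VNᵀ)))) * (SNᵀ * (SN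 * VN))) := by abel
      rwa [e] at h
    have t3 : frobNorm (((A - UM * (UMᵀ * (A * VN)) * VNᵀ) - (UM * (UMᵀ * (A - UM * (UMᵀ * (A * VN)) * VNᵀ)))) * VN) ≤ frobNorm ((A - UM * (UMᵀ * (A * VN)) * VNᵀ) - (UM * (UMᵀ * (A - UM * (UMᵀ * (A * VN)) * VNᵀ)))) := frob_mul_orth_right _ VN hVN
    linarith
  have hR1b : frobNorm (UMᵀ * (SMᵀ * (SM * (((A - UM * (UMᵀ * (A * VN)) * VNᵀ) - (UM * (UMᵀ * (A - UM * (UMᵀ * (A * VN)) * VNᵀ)))) * (SNᵀ * (SN * VN)))))) ≤ Real.sqrt ε * (frobNorm ((A - UM * (UMᵀ * (A * VN)) * VNᵀ) - (UM * (UMᵀ * (A - UM * (UMᵀ * (A * VN)) * VNᵀ)))) + Real.sqrt ε * frobNorm ((A - UM * (UMᵀ * (A * VN)) * VNᵀ) - (UM * (UMᵀ * (A - UM * (UMᵀ * (A * VN)) * VNᵀ))))) := by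
    rw [eR1]
    refine le_trans (hbM ρN (((A - UM * (UMᵀ * (A * VN)) * VNᵀ) - (UM * (UMᵀ * (A - UM * (UMᵀ * (A * VN)) * VNᵀ)))) * (SNᵀ * (SN * VN)))) ?_
    exact mul_le_mul_of_nonneg_left hB1b he0
  -- bound on R2
  have hC2VN : (UMᵀ * SMᵀ * SM * (UM * (UMᵀ * (A - UM * (UMᵀ * (A * VN)) * VNᵀ)))) * VN = 0 := by
    rw [Matrix.mul_assoc (UMᵀ * SMᵀ * SM) (UM * (UMᵀ * (A - UM * (UMᵀ * (A * VN)) * VNᵀ))) VN, hA2VN, Matrix.mul_zero]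
  have eR2 : (UMᵀ * (SMᵀ * (SM * ((UM * (UMᵀ * (A - UM * (UMᵀ * (A * VN)) * VNᵀ))) * (SNᵀ * (SN * VN)))))) = (UMᵀ * SMᵀ * SM * (UM * (UMᵀ * (A - UM * (UMᵀ * (A * VN)) * VNᵀ)))) * SNᵀ * SN * VN - (UMᵀ * SMᵀ * SM * (UM * (UMᵀ * (A - UM * (UMᵀ * (A * VN)) * VNᵀ)))) * VN := by
    rw [hC2VN, sub_zero]; simp only [Matrix.mul_assoc]
  have hC2b : frobNorm (UMᵀ * SMᵀ * SM * (UM * (UMᵀ * (A - UM * (UMᵀ * (A * VN)) * VNᵀ)))) ≤ frobNorm (UM * (UMᵀ * (A - UM * (UMᵀ * (A * VN)) * VNᵀ))) + Real.sqrt ε * frobNorm (UM * (UMᵀ * (A - UM * (UMᵀ * (A * VN)) * VNᵀ))) := by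
    have t1 : frobNorm ((UMᵀ * SMᵀ * SM * (UM * (UMᵀ * (A - UM * (UMᵀ * (A * VN)) * VNᵀ)))) - UMᵀ * (UM * (UMᵀ * (A - UM * (UMᵀ * (A * VN)) * VNᵀ)))) ≤ Real.sqrt ε * frobNorm (UM * (UMᵀ * (A - UM * (UMᵀ * (A * VN)) * VNᵀ))) := hbM n (UM * (UMᵀ * (A - UM * (UMᵀ * (A * VN)) * VNᵀ)))
    have t2 : frobNorm (UMᵀ * SMᵀ * SM * (UM * (UMᵀ * (A - UM * (UMᵀ * (A * VN)) * VNᵀ)))) ≤ frobNorm (UMᵀ * (UM * (UMᵀ * (A - UM * (UMᵀ * (A * VN)) * VNᵀ)))) + frobNorm ((UMᵀ * SMᵀ * SM * (UM * (UMᵀ * (A - UM * (UMᵀ * (A * VN)) * VNᵀ)))) - UMᵀ * (UM * (UMᵀ * (A - UM * (UMᵀ * (A * VN)) * VNᵀ)))) := by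
      have h := frob_triangle (UMᵀ * (UM * (UMᵀ * (A - UM * (UMᵀ * (A * VN)) * VNᵀ)))) ((UMᵀ * SMᵀ * SM * (UM * (UMᵀ * (A - UM * (UMᵀ * (A * VN)) * VNᵀ)))) - UMᵀ * (UM * (UMᵀ * (A - UM * (UMᵀ * (A * VN)) * VNᵀ))))
      have e : UMᵀ * (UM * (UMᵀ * (A - UM * (UMᵀ * (A * VN)) * VNᵀ))) + ((UMᵀ * SMᵀ * SM * (UM * (UMᵀ * (A - UM * (UMᵀ * (A * VN)) * VNᵀ)))) - UMᵀ * (UM * (UMᵀ * (A - UM * (UMᵀ * (A * VN)) * VNᵀ)))) = (UMᵀ * SMᵀ * SM * (UM * (UMᵀ * (A - UM * (UMᵀ * (A * VN)) * VNᵀ)))) := by abel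
      rwa [e] at h
    have t3 : frobNorm (UMᵀ * (UM * (UMᵀ * (A - UM * (UMᵀ * (A * VN)) * VNᵀ)))) ≤ frobNorm (UM * (UMᵀ * (A - UM * (UMᵀ * (A * VN)) * VNᵀ))) := frob_orth_mul_left UM hUM (UM * (UMᵀ * (A - UM * (UMᵀ * (A * VN)) * VNᵀ)))
    linarith
  have hR2b : frobNorm (UMᵀ * (SMᵀ * (SM * ((UM * (UMᵀ * (A - UM * (UMᵀ * (A * VN)) * VNᵀ))) * (SNᵀ * (SN * VN)))))) ≤ Real.sqrt ε * (frobNorm (UM * (UMᵀ * (A - UM * (UMᵀ * (A * VN)) * VNᵀ))) + Real.sqrt ε * frobNorm (UM * (UMᵀ * (A - UM * (UMᵀ * (A * VN)) * VNᵀ)))) := by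
    rw [eR2]
    refine le_trans (hbN ρM (UMᵀ * SMᵀ * SM * (UM * (UMᵀ * (A - UM * (UMᵀ * (A * VN)) * VNᵀ))))) ?_
    exact mul_le_mul_of_nonneg_left hC2b he0
  -- combine
  have hRb : frobNorm (UMᵀ * (SMᵀ * (SM * ((A - UM * (UMᵀ * (A * VN)) * VNᵀ) * (SNᵀ * (SN * VN)))))) ≤ frobNorm (UMᵀ * (SMᵀ * (SM * (((A - UM * (UMᵀ * (A * VN)) * VNᵀ) - (UM * (UMᵀ * (A - UM * (UMᵀ * (A * VN)) * VNᵀ)))) * (SNᵀ * (SN * VN)))))) + frobNorm (UMᵀ * (SMᵀ * (SM * ((UM * (UMᵀ * (A - UM * (UMᵀ * (A * VN)) * VNᵀ))) * (SNᵀ * (SN * VN)))))) := by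
    have h := frob_triangle (UMᵀ * (SMᵀ * (SM * (((A - UM * (UMᵀ * (A * VN)) * VNᵀ) - (UM * (UMᵀ * (A - UM * (UMᵀ * (A * VN)) * VNᵀ)))) * (SNᵀ * (SN * VN)))))) (UMᵀ * (SMᵀ * (SM * ((UM * (UMᵀ * (A - UM * (UMᵀ * (A * VN)) * VNᵀ))) * (SNᵀ * (SN * VN))))))
    rwa [hRsplitEq] at h
  have hfinal : fsq ((SigM * (VMᵀ * ((P1 * SM * A * SNᵀ * P2) * UN)) * SigN) - (UMᵀ * (A * VN))) ≤ 256 * ε * fsq (A - UM * (UMᵀ * (A * VN)) * VNᵀ) := by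
    have hcomb : frobNorm (UMᵀ * (SMᵀ * (SM * ((A - UM * (UMᵀ * (A * VN)) * VNᵀ) * (SNᵀ * (SN * VN)))))) ≤ Real.sqrt ε * (frobNorm ((A - UM * (UMᵀ * (A * VN)) * VNᵀ) - (UM * (UMᵀ * (A - UM * (UMᵀ * (A * VN)) * VNᵀ)))) + Real.sqrt ε * frobNorm ((A - UM * (UMᵀ * (A * VN)) * VNᵀ) - (UM * (UMᵀ * (A - UM * (UMᵀ * (A * VN)) * VNᵀ)))))
        + Real.sqrt ε * (frobNorm (UM * (UMᵀ * (A - UM * (UMᵀ * (A * VN)) * VNᵀ))) + Real.sqrt ε * frobNorm (UM * (UMᵀ * (A - UM * (UMᵀ * (A * VN)) * VNᵀ)))) :=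
      le_trans hRb (add_le_add hR1b hR2b)
    have hy : fsq ((SigM * (VMᵀ * ((P1 * SM * A * SNᵀ * P2) * UN)) * SigN) - (UMᵀ * (A * VN))) ≤ 16 * frobNorm (UMᵀ * (SMᵀ * (SM * ((A - UM * (UMᵀ * (A * VN)) * VNᵀ) * (SNᵀ * (SN * VN)))))) ^ 2 := by
      rw [frobNorm_sq]; exact hY16
    rw [hpyth2, ← frobNorm_sq ((A - UM * (UMᵀ * (A * VN)) * VNᵀ) - (UM * (UMᵀ * (A - UM * (UMᵀ * (A * VN)) * VNᵀ)))), ← frobNorm_sq (UM * (UMᵀ * (A - UM * (UMᵀ * (A * VN)) * VNᵀ)))]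
    exact arith_final ε (Real.sqrt ε) _ _ _ _ hε he0 he1 he2 (frobNorm_nonneg _)
      (frobNorm_nonneg _) (frobNorm_nonneg _) hy hcomb
  -- finish
  rw [frobNorm_sq, frobNorm_sq]
  have hRHS : fsq (A - M * (Mdag * A * Ndag) * N) = fsq (A - UM * (UMᵀ * (A * VN)) * VNᵀ) := by rw [step1]
  rw [hRHS, split]
  have hABn := fsq_nonneg (A - UM * (UMᵀ * (A * VN)) * VNᵀ)
  nlinarith [hfinal, hABn, hε.le, mul_nonneg hε.le hABn]
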